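/- Let Φ(ξ,η) = √(|ξ|²+1) − √(2|ξ−η|²+4) + √(|η|²+1). There exists L₀ ≥ 1000 such that for every real l ≥ L₀ and every ξ ∈ ℝ² with 2^{−3l−1} ≤ |ξ| ≤ 2^{−3l+1}, there exists a unique η ∈ ℝ² with ∇_ηΦ(ξ,η) = 0; moreover this critical point satisfies 2^{−l} ≤ |η| ≤ 2^{−l+2}, η is a positive multiple of ξ, and Φ(ξ,η) ≠ 0. (This is Corollary 2.3: for |ξ| ∼ 2^{−3l} the phase has a unique stationary point in η, located at |η| ∼ 2^{−l}, and the phase does not vanish there.) -/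

import Mathlib

noncomputable def Phi (ξ η : EuclideanSpace ℝ (Fin 2)) : ℝ :=
  Real.sqrt (‖ξ‖ ^ 2 + 1) - Real.sqrt (2 * ‖ξ - η‖ ^ 2 + 4) + Real.sqrt (‖η‖ ^ 2 + 1)

noncomputable def gradPhi (ξ η : EuclideanSpace ℝ (Fin 2)) : EuclideanSpace ℝ (Fin 2) :=
  (2 / Real.sqrt (2 * ‖ξ - η‖ ^ 2 + 4)) • (ξ - η) + (1 / Real.sqrt (‖η‖ ^ 2 + 1)) • η

noncomputable def Fs (s : ℝ) : ℝ := s - s * Real.sqrt 2 / Real.sqrt (s ^ 2 + 2)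

lemma sqrtR_pos (s : ℝ) : 0 < Real.sqrt (s ^ 2 + 2) := Real.sqrt_pos.mpr (by positivity)



lemma Fs_mul (s : ℝ) :
    Fs s * (Real.sqrt (s ^ 2 + 2) * (Real.sqrt (s ^ 2 + 2) + Real.sqrt 2)) = s ^ 3 := by
  have hR := sqrtR_pos s
  have hR2 : Real.sqrt (s ^ 2 + 2) ^ 2 = s ^ 2 + 2 := Real.sq_sqrt (by positivity)
  have h2 : Real.sqrt 2 ^ 2 = 2 := Real.sq_sqrt (by norm_num)
  unfold Fs
  field_simp
  linear_combination s * hR2 - s * h2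

lemma sqrt2_le (s : ℝ) : Real.sqrt 2 ≤ Real.sqrt (s ^ 2 + 2) :=
  Real.sqrt_le_sqrt (by nlinarith [sq_nonneg s])

lemma Fs_bounds {s : ℝ} (h0 : 0 ≤ s) (h1 : s ≤ 1/2) :
    s ^ 3 / 5 ≤ Fs s ∧ Fs s ≤ s ^ 3 / 4 := by
  set R := Real.sqrt (s ^ 2 + 2) with hRdef
  have hR := sqrtR_pos s
  have hR2 : R ^ 2 = s ^ 2 + 2 := Real.sq_sqrt (by positivity)
  have h2 : Real.sqrt 2 ^ 2 = 2 := Real.sq_sqrt (by norm_num)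
  have h2pos : (0:ℝ) < Real.sqrt 2 := Real.sqrt_pos.mpr (by norm_num)
  have hs2 : Real.sqrt 2 ≤ R := sqrt2_le s
  have hRle : R ≤ 3/2 := by
    rw [hRdef]
    rw [show (3:ℝ)/2 = Real.sqrt ((3/2)^2) by rw [Real.sqrt_sq]; norm_num]
    exact Real.sqrt_le_sqrt (by nlinarith)
  have hs2lt : Real.sqrt 2 ≤ 1.415 := by nlinarith [h2, Real.sqrt_nonneg 2]
  have hMub : R * (R + Real.sqrt 2) ≤ 5 := by nlinarith
  have hMlb : 4 ≤ R * (R + Real.sqrt 2) := by nlinarith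
  have key := Fs_mul s
  rw [← hRdef] at key
  have hFnn : 0 ≤ Fs s := by nlinarith [pow_nonneg h0 3]
  constructor
  · nlinarith [pow_nonneg h0 3]
  · nlinarith [pow_nonneg h0 3]



lemma Fs_inj {a b : ℝ} (ha : 0 < a) (hb : 0 < b) (h : Fs a = Fs b) : a = b := by
  by_contra hne
  set α := Real.sqrt (a ^ 2 + 2) with hα
  set β := Real.sqrt (b ^ 2 + 2) with hβ
  have hαpos := sqrtR_pos a
  have hβpos := sqrtR_pos b
  rw [← hα] at hαpos
  rw [← hβ] at hβpos
  have hα2 : α ^ 2 = a ^ 2 + 2 := Real.sq_sqrt (by positivity)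
  have hβ2 : β ^ 2 = b ^ 2 + 2 := Real.sq_sqrt (by positivity)
  have h2 : Real.sqrt 2 ^ 2 = 2 := Real.sq_sqrt (by norm_num)
  have h2pos : (0:ℝ) < Real.sqrt 2 := Real.sqrt_pos.mpr (by norm_num)
  have hαgt : Real.sqrt 2 < α := by
    rw [hα]; exact Real.sqrt_lt_sqrt (by norm_num) (by nlinarith)
  have hβgt : Real.sqrt 2 < β := by
    rw [hβ]; exact Real.sqrt_lt_sqrt (by norm_num) (by nlinarith)
  have key : (a - b) * (α * β) = Real.sqrt 2 * (a * β - b * α) := by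
    have h' : a - a * Real.sqrt 2 / α = b - b * Real.sqrt 2 / β := h
    field_simp at h'
    linear_combination h'
  have key2 : (a * β - b * α) * (a * β + b * α) = 2 * (a - b) * (a + b) := by
    linear_combination a ^ 2 * hβ2 - b ^ 2 * hα2
  have key3 : (a - b) * (α * β * (a * β + b * α)) = (a - b) * (2 * Real.sqrt 2 * (a + b)) := by
    linear_combination (a * β + b * α) * key + Real.sqrt 2 * key2
  have hab : α * β * (a * β + b * α) = 2 * Real.sqrt 2 * (a + b) :=
    mul_left_cancel₀ (sub_ne_zero.mpr hne) key3
  have h1 : Real.sqrt 2 * (a + b) < a * β + b * α := by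
    nlinarith [mul_lt_mul_of_pos_left hβgt ha, mul_lt_mul_of_pos_left hαgt hb]
  have h3 : 2 < α * β := by
    nlinarith [mul_pos (sub_pos.mpr hαgt) (sub_pos.mpr hβgt)]
  have hS : 0 < a * β + b * α := by positivity
  nlinarith [mul_pos (sub_pos.mpr h3) hS]

lemma scalar_crit {r s : ℝ} (hr : 0 < r) :
    2 * (r - s) / Real.sqrt (2 * (r - s) ^ 2 + 4) + s / Real.sqrt (s ^ 2 + 1) = 0 ↔
      0 < s ∧ Fs s = r := by
  have hPpos : 0 < Real.sqrt (s ^ 2 + 1) := Real.sqrt_pos.mpr (by positivity)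
  have hQpos : 0 < Real.sqrt (2 * (r - s) ^ 2 + 4) := Real.sqrt_pos.mpr (by positivity)
  have hRpos : 0 < Real.sqrt (s ^ 2 + 2) := sqrtR_pos s
  set P := Real.sqrt (s ^ 2 + 1) with hPdef
  set Q := Real.sqrt (2 * (r - s) ^ 2 + 4) with hQdef
  set R := Real.sqrt (s ^ 2 + 2) with hRdef
  have hP2 : P ^ 2 = s ^ 2 + 1 := Real.sq_sqrt (by positivity)
  have hQ2 : Q ^ 2 = 2 * (r - s) ^ 2 + 4 := Real.sq_sqrt (by positivity)
  have hR2 : R ^ 2 = s ^ 2 + 2 := Real.sq_sqrt (by positivity)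
  have h2 : Real.sqrt 2 ^ 2 = 2 := Real.sq_sqrt (by norm_num)
  have h2pos : (0:ℝ) < Real.sqrt 2 := Real.sqrt_pos.mpr (by norm_num)
  simp only [Fs, ← hRdef]
  clear_value P Q R
  constructor
  · intro h
    have hcross : 2 * (r - s) * P + s * Q = 0 := by
      field_simp at h
      linear_combination h
    have hcross2 : (2 * (r - s) * P) ^ 2 = (s * Q) ^ 2 := by
      have h' : 2 * (r - s) * P = -(s * Q) := by linarith
      rw [h']; ring
    have hsq : (s - r) ^ 2 * (s ^ 2 + 2) = 2 * s ^ 2 := by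
      linear_combination (1/2) * hcross2 - 2 * (r - s) ^ 2 * hP2 + (s ^ 2 / 2) * hQ2
    have hspos : 0 < s := by
      rcases lt_trichotomy s 0 with hs | hs | hs
      · exfalso
        nlinarith [hsq, mul_pos hr hr, mul_pos (neg_pos.mpr hs) hr,
          mul_pos (mul_pos (neg_pos.mpr hs) hr) (mul_pos_of_neg_of_neg hs hs)]
      · exfalso; rw [hs] at hsq; nlinarith
      · exact hs
    have htpos : 0 < s - r := by
      by_contra h'
      push_neg at h'
      nlinarith [mul_pos hspos hQpos, mul_le_mul_of_nonneg_right h' hPpos.le]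
    refine ⟨hspos, ?_⟩
    have hsq2 : ((s - r) * R) ^ 2 = (Real.sqrt 2 * s) ^ 2 := by
      linear_combination (s - r) ^ 2 * hR2 + hsq - s ^ 2 * h2
    have heq : (s - r) * R = Real.sqrt 2 * s := by
      have h0 : ((s - r) * R - Real.sqrt 2 * s) * ((s - r) * R + Real.sqrt 2 * s) = 0 := by
        linear_combination hsq2
      rcases mul_eq_zero.mp h0 with h0 | h0
      · linarith
      · exfalso; nlinarith [mul_pos htpos hRpos, mul_pos h2pos hspos]
    field_simp
    linear_combination heq
  · rintro ⟨hspos, hFs⟩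
    have ht : (s - r) * R = Real.sqrt 2 * s := by
      field_simp at hFs
      linear_combination hFs
    have htpos : 0 < s - r := by
      by_contra h'
      push_neg at h'
      nlinarith [mul_pos h2pos hspos, mul_le_mul_of_nonneg_right h' hRpos.le]
    have hts : (s - r) ^ 2 * (s ^ 2 + 2) = 2 * s ^ 2 := by
      linear_combination ((s - r) * R + Real.sqrt 2 * s) * ht - (s - r) ^ 2 * hR2 + s ^ 2 * h2
    have hsq : (2 * (s - r) * P) ^ 2 = (s * Q) ^ 2 := by
      linear_combination 4 * (s - r) ^ 2 * hP2 - s ^ 2 * hQ2 + 2 * hts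
    have heq : 2 * (s - r) * P = s * Q := by
      have h0 : (2 * (s - r) * P - s * Q) * (2 * (s - r) * P + s * Q) = 0 := by
        linear_combination hsq
      rcases mul_eq_zero.mp h0 with h0 | h0
      · linarith
      · exfalso; nlinarith [mul_pos (mul_pos (show (0:ℝ) < 2 by norm_num) htpos) hPpos,
          mul_pos hspos hQpos]
    field_simp
    linear_combination -heq



lemma norm_smul_sq (c : ℝ) (ξ : EuclideanSpace ℝ (Fin 2)) :
    ‖c • ξ‖ ^ 2 = (c * ‖ξ‖) ^ 2 := by
  rw [norm_smul, Real.norm_eq_abs, mul_pow, mul_pow, sq_abs]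

lemma gradPhi_smul (ξ : EuclideanSpace ℝ (Fin 2)) (c : ℝ) :
    gradPhi ξ (c • ξ) =
      (2 * (1 - c) / Real.sqrt (2 * ((1 - c) * ‖ξ‖) ^ 2 + 4) +
       c / Real.sqrt ((c * ‖ξ‖) ^ 2 + 1)) • ξ := by
  have h1 : ξ - c • ξ = (1 - c) • ξ := by rw [sub_smul, one_smul]
  rw [gradPhi, h1, norm_smul_sq, norm_smul_sq, smul_smul, smul_smul, ← add_smul]
  congr 1
  ring

lemma grad_zero_iff (ξ : EuclideanSpace ℝ (Fin 2)) (hξ : 0 < ‖ξ‖) (c : ℝ) :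
    gradPhi ξ (c • ξ) = 0 ↔ (0 < c * ‖ξ‖ ∧ Fs (c * ‖ξ‖) = ‖ξ‖) := by
  rw [← scalar_crit hξ]
  rw [gradPhi_smul, smul_eq_zero]
  have hξ0 : ξ ≠ 0 := by simpa using hξ.ne'
  have hQpos : 0 < Real.sqrt (2 * ((1 - c) * ‖ξ‖) ^ 2 + 4) := Real.sqrt_pos.mpr (by positivity)
  have hPpos : 0 < Real.sqrt ((c * ‖ξ‖) ^ 2 + 1) := Real.sqrt_pos.mpr (by positivity)
  have harg : ((1 - c) * ‖ξ‖) = ‖ξ‖ - c * ‖ξ‖ := by ring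
  rw [harg]
  have hveq : 2 * (‖ξ‖ - c * ‖ξ‖) / Real.sqrt (2 * (‖ξ‖ - c * ‖ξ‖) ^ 2 + 4) +
      (c * ‖ξ‖) / Real.sqrt ((c * ‖ξ‖) ^ 2 + 1) =
      ‖ξ‖ * (2 * (1 - c) / Real.sqrt (2 * (‖ξ‖ - c * ‖ξ‖) ^ 2 + 4) +
        c / Real.sqrt ((c * ‖ξ‖) ^ 2 + 1)) := by ring
  constructor
  · rintro (h | h)
    · rw [hveq, h, mul_zero]
    · exact absurd h hξ0
  · intro h
    left
    rw [hveq] at h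
    rcases mul_eq_zero.mp h with h | h
    · exact absurd h hξ.ne'
    · exact h

lemma grad_collinear (ξ η : EuclideanSpace ℝ (Fin 2)) (hξ : ξ ≠ 0)
    (h : gradPhi ξ η = 0) : ∃ c : ℝ, η = c • ξ := by
  rw [gradPhi] at h
  set a := 2 / Real.sqrt (2 * ‖ξ - η‖ ^ 2 + 4) with ha
  set b := 1 / Real.sqrt (‖η‖ ^ 2 + 1) with hb
  have hapos : 0 < a := by
    rw [ha]
    exact div_pos two_pos (Real.sqrt_pos.mpr (by positivity))
  have h4 : a • ξ = (a - b) • η := by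
    have h3 : (a • ξ - a • η) + b • η = 0 := by rwa [← smul_sub]
    rw [sub_smul]
    linear_combination (norm := abel) h3
  by_cases hab : a - b = 0
  · rw [hab, zero_smul] at h4
    rcases smul_eq_zero.mp h4 with h5 | h5
    · exact absurd h5 hapos.ne'
    · exact absurd h5 hξ
  · refine ⟨(a - b)⁻¹ * a, ?_⟩
    rw [mul_smul, h4, inv_smul_smul₀ hab]

lemma sqrt_le_lin {x : ℝ} (hx : 0 ≤ x) : Real.sqrt (x + 1) ≤ 1 + x / 2 := by
  rw [show (1:ℝ) + x / 2 = Real.sqrt ((1 + x / 2) ^ 2) from (Real.sqrt_sq (by linarith)).symm]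
  exact Real.sqrt_le_sqrt (by nlinarith)

lemma sqrt_ge_lin {x : ℝ} (hx : 0 ≤ x) (hx1 : x ≤ 1) :
    1 + x / 2 - x ^ 2 / 8 ≤ Real.sqrt (x + 1) := by
  have h := Real.sq_sqrt (show (0:ℝ) ≤ x + 1 by linarith)
  have hnn := Real.sqrt_nonneg (x + 1)
  nlinarith [sq_nonneg (Real.sqrt (x + 1) - (1 + x / 2 - x ^ 2 / 8)),
    mul_nonneg (mul_nonneg hx hx) hx, mul_nonneg (mul_nonneg (mul_nonneg hx hx) hx) hx]

lemma sqrt_mid_le {t : ℝ} : Real.sqrt (2 * t ^ 2 + 4) ≤ 2 + t ^ 2 / 2 := by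
  rw [show (2:ℝ) + t ^ 2 / 2 = Real.sqrt ((2 + t ^ 2 / 2) ^ 2) from
    (Real.sqrt_sq (by positivity)).symm]
  exact Real.sqrt_le_sqrt (by nlinarith [sq_nonneg (t ^ 2)])

lemma Phi_pos {r s : ℝ} (hr : 0 < r) (hs : 0 < s) (hs1 : s ≤ 1 / 2) (hFs : Fs s = r) :
    0 < Real.sqrt (r ^ 2 + 1) - Real.sqrt (2 * (r - s) ^ 2 + 4) + Real.sqrt (s ^ 2 + 1) := by
  obtain ⟨h5, h4⟩ := Fs_bounds hs.le hs1
  rw [hFs] at h5 h4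
  have hr1 : r ≤ 1 := by nlinarith [pow_le_pow_left₀ hs.le hs1 3]
  have hs1' : s ≤ 1 := by linarith
  have e1 := sqrt_ge_lin (sq_nonneg r) (by nlinarith)
  have e2 := sqrt_ge_lin (sq_nonneg s) (by nlinarith)
  have e3 := sqrt_mid_le (t := r - s)
  have hrs : s ^ 4 / 5 ≤ r * s := by nlinarith
  have hr4 : r ^ 4 ≤ s ^ 4 / 256 := by nlinarith [pow_le_pow_left₀ hr.le h4 4, pow_le_pow_of_le_one hs.le hs1' (show 4 ≤ 12 by norm_num)]
  nlinarith [sq_nonneg r, sq_nonneg s, pow_pos hs 4, sq_nonneg (r - s), sq_nonneg (r ^ 2), sq_nonneg (s ^ 2)]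


theorem unique_stationary_point :
    ∃ L₀ : ℝ, 1000 ≤ L₀ ∧ ∀ l : ℝ, L₀ ≤ l → ∀ ξ : EuclideanSpace ℝ (Fin 2),
      (2 : ℝ) ^ (-3 * l - 1) ≤ ‖ξ‖ → ‖ξ‖ ≤ (2 : ℝ) ^ (-3 * l + 1) →
      (∃! η : EuclideanSpace ℝ (Fin 2), gradPhi ξ η = 0) ∧
      (∀ η : EuclideanSpace ℝ (Fin 2), gradPhi ξ η = 0 →
        (2 : ℝ) ^ (-l) ≤ ‖η‖ ∧ ‖η‖ ≤ (2 : ℝ) ^ (-l + 2) ∧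
        (∃ c : ℝ, 0 < c ∧ η = c • ξ) ∧ Phi ξ η ≠ 0) := by
  refine ⟨1000, le_refl _, ?_⟩
  intro l hl ξ hlow hup
  have hrpos : 0 < ‖ξ‖ := lt_of_lt_of_le (Real.rpow_pos_of_pos two_pos _) hlow
  have hξ0 : ξ ≠ 0 := norm_ne_zero_iff.mp hrpos.ne'
  have hApos : (0:ℝ) < (2:ℝ) ^ (-l) := Real.rpow_pos_of_pos two_pos _
  have hBpos : (0:ℝ) < (2:ℝ) ^ (-l + 2) := Real.rpow_pos_of_pos two_pos _
  have hAB : (2:ℝ) ^ (-l) ≤ (2:ℝ) ^ (-l + 2) :=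
    Real.rpow_le_rpow_of_exponent_le one_le_two (by linarith)
  have hneg1 : (2:ℝ) ^ (-1:ℝ) = 1 / 2 := by
    rw [show (-1:ℝ) = ((-1:ℤ):ℝ) by norm_num, Real.rpow_intCast]; norm_num
  have hB12 : (2:ℝ) ^ (-l + 2) ≤ 1 / 2 := by
    have h := Real.rpow_le_rpow_of_exponent_le (show (1:ℝ) ≤ 2 by norm_num)
      (show -l + 2 ≤ (-1:ℝ) by linarith)
    rwa [hneg1] at h
  have hA12 : (2:ℝ) ^ (-l) ≤ 1 / 2 := le_trans hAB hB12
  have hA3 : ((2:ℝ) ^ (-l)) ^ 3 = (2:ℝ) ^ (-l * 3) := by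
    rw [← Real.rpow_natCast ((2:ℝ) ^ (-l)) 3, ← Real.rpow_mul (by norm_num : (0:ℝ) ≤ 2)]
    norm_num
  have hB3 : ((2:ℝ) ^ (-l + 2)) ^ 3 = (2:ℝ) ^ ((-l + 2) * 3) := by
    rw [← Real.rpow_natCast ((2:ℝ) ^ (-l + 2)) 3, ← Real.rpow_mul (by norm_num : (0:ℝ) ≤ 2)]
    norm_num
  have hFA : Fs ((2:ℝ) ^ (-l)) ≤ ‖ξ‖ := by
    have hb := (Fs_bounds hApos.le hA12).2
    have hsplit : (2:ℝ) ^ (-3 * l - 1) = (2:ℝ) ^ (-l * 3) * (2:ℝ) ^ (-1:ℝ) := by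
      rw [← Real.rpow_add two_pos]; ring_nf
    have hml3 : (0:ℝ) < (2:ℝ) ^ (-l * 3) := Real.rpow_pos_of_pos two_pos _
    calc Fs ((2:ℝ) ^ (-l)) ≤ ((2:ℝ) ^ (-l)) ^ 3 / 4 := hb
      _ ≤ (2:ℝ) ^ (-3 * l - 1) := by rw [hA3, hsplit, hneg1]; linarith
      _ ≤ ‖ξ‖ := hlow
  have hFB : ‖ξ‖ ≤ Fs ((2:ℝ) ^ (-l + 2)) := by
    have hb := (Fs_bounds hBpos.le hB12).1
    have hsplit : (2:ℝ) ^ ((-l + 2) * 3) = (2:ℝ) ^ (-3 * l + 1) * (2:ℝ) ^ (5:ℝ) := by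
      rw [← Real.rpow_add two_pos]; ring_nf
    have h5 : (2:ℝ) ^ (5:ℝ) = 32 := by
      rw [show (5:ℝ) = ((5:ℕ):ℝ) by norm_num, Real.rpow_natCast]; norm_num
    have hml : (0:ℝ) < (2:ℝ) ^ (-3 * l + 1) := Real.rpow_pos_of_pos two_pos _
    calc ‖ξ‖ ≤ (2:ℝ) ^ (-3 * l + 1) := hup
      _ ≤ ((2:ℝ) ^ (-l + 2)) ^ 3 / 5 := by rw [hB3, hsplit, h5]; linarith
      _ ≤ Fs ((2:ℝ) ^ (-l + 2)) := hb
  have hcont : Continuous Fs := by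
    unfold Fs
    apply continuous_id.sub
    apply Continuous.div (continuous_id.mul continuous_const)
      (Real.continuous_sqrt.comp (by continuity))
    intro x
    exact (sqrtR_pos x).ne'
  obtain ⟨s₀, hs₀mem, hs₀⟩ := intermediate_value_Icc hAB hcont.continuousOn ⟨hFA, hFB⟩
  obtain ⟨hs₀A, hs₀B⟩ := hs₀mem
  have hs₀pos : 0 < s₀ := lt_of_lt_of_le hApos hs₀A
  set c₀ := s₀ / ‖ξ‖ with hc₀
  have hc₀r : c₀ * ‖ξ‖ = s₀ := by rw [hc₀]; field_simp
  have hc₀pos : 0 < c₀ := div_pos hs₀pos hrpos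
  have hcrit : ∀ η, gradPhi ξ η = 0 ↔ η = c₀ • ξ := by
    intro η
    constructor
    · intro h
      obtain ⟨c, rfl⟩ := grad_collinear ξ η hξ0 h
      rw [grad_zero_iff ξ hrpos] at h
      obtain ⟨hpos, hFsc⟩ := h
      have hcs : c * ‖ξ‖ = s₀ := Fs_inj hpos hs₀pos (hFsc.trans hs₀.symm)
      have hc : c = c₀ := by rw [hc₀, eq_div_iff hrpos.ne']; exact hcs
      rw [hc]
    · rintro rfl
      rw [grad_zero_iff ξ hrpos, hc₀r]
      exact ⟨hs₀pos, hs₀⟩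
  constructor
  · exact ⟨c₀ • ξ, (hcrit _).mpr rfl, fun η h => (hcrit η).mp h⟩
  · intro η h
    have hη := (hcrit η).mp h
    subst hη
    have hnorm : ‖c₀ • ξ‖ = s₀ := by
      rw [norm_smul, Real.norm_eq_abs, abs_of_pos hc₀pos, hc₀r]
    refine ⟨by rw [hnorm]; exact hs₀A, by rw [hnorm]; exact hs₀B, ⟨c₀, hc₀pos, rfl⟩, ?_⟩
    have hsub : ‖ξ - c₀ • ξ‖ ^ 2 = (‖ξ‖ - s₀) ^ 2 := by
      rw [show ξ - c₀ • ξ = (1 - c₀) • ξ from by rw [sub_smul, one_smul], norm_smul_sq,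
        show (1 - c₀) * ‖ξ‖ = ‖ξ‖ - s₀ from by rw [sub_mul, one_mul, hc₀r]]
    have hpos := Phi_pos hrpos hs₀pos (le_trans hs₀B hB12) hs₀
    rw [Phi, hsub, norm_smul_sq, hc₀r]
    exact ne_of_gt hpos
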